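/- Let p be a real pyramid and let I = [a,b) and J = [a',b') be real intervals with I ⊆ J. If either (p + 1_I and p + 1_I + 1_J are both real pyramids) or (p + 1_J and p + 1_J + 1_I are both real pyramids), then a' < a and b < b' (i.e. the closure of I is contained in the interior of J). -/

import Mathlib

noncomputable section
open Function
open scoped Classical

/-- The `ℕ`-valued indicator function of the interval `[a, b)`. -/
def ind (a b : ℝ) : ℝ → ℕ := (Set.Ico a b).indicator fun _ => 1

/-- A real pyramid: a function `p : ℝ → ℕ` vanishing outside a bounded set, maximal at `0`,
nondecreasing on `(-∞, 0]`, nonincreasing on `[0, ∞)`, right-continuous and piecewise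
constant with finitely many discontinuities, and with jumps of size at most 1
(`p₋(x)` is the left limit of `p` at `x`). -/
def IsRealPyramid (p : ℝ → ℕ) : Prop :=
  (∃ M : ℝ, ∀ x : ℝ, M ≤ |x| → p x = 0) ∧
  (∀ x, p x ≤ p 0) ∧
  (∀ ⦃x y : ℝ⦄, x ≤ y → y ≤ 0 → p x ≤ p y) ∧
  (∀ ⦃x y : ℝ⦄, 0 ≤ x → x ≤ y → p y ≤ p x) ∧
  (∀ x, ContinuousWithinAt p (Set.Ici x) x) ∧
  {x : ℝ | ¬ ContinuousAt p x}.Finite ∧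
  (∀ x, |(p x : ℤ) - ((Function.leftLim p x : ℕ) : ℤ)| ≤ 1)

/-- The interval `[a, b)` is addable for `p` if `p + 1_{[a,b)}` is again a real pyramid. -/
def Addable (p : ℝ → ℕ) (a b : ℝ) : Prop := IsRealPyramid (fun x => p x + ind a b x)

/-- The interval `[a, b)` is removable for `p` if `p ≥ 1` on `[a, b)` and `p − 1_{[a,b)}`
is again a real pyramid. -/
def Removable (p : ℝ → ℕ) (a b : ℝ) : Prop :=
  (∀ x ∈ Set.Ico a b, 1 ≤ p x) ∧ IsRealPyramid (fun x => p x - ind a b x)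

/-- `n_J(p)`: `1` if `J = [a,b)` is addable for `p`, `−1` if removable, `0` otherwise. -/
def nJ (p : ℝ → ℕ) (a b : ℝ) : ℤ :=
  if Addable p a b then 1 else if Removable p a b then -1 else 0


/-- A `ℕ`-valued function with finitely many discontinuities is constant to the left
of any point, with value its left limit. -/
lemma left_const (f : ℝ → ℕ) (hf : {x : ℝ | ¬ ContinuousAt f x}.Finite) (a : ℝ) :
    ∃ m < a, ∀ x ∈ Set.Ioo m a, f x = Function.leftLim f a := by
  -- find m < a with no discontinuities in (m, a)
  obtain ⟨m, hm, hcont⟩ : ∃ m < a, ∀ x ∈ Set.Ioo m a, ContinuousAt f x := by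
    by_cases hne : ({x : ℝ | ¬ ContinuousAt f x} ∩ Set.Iio a).Nonempty
    · have hfin : ({x : ℝ | ¬ ContinuousAt f x} ∩ Set.Iio a).Finite :=
        hf.inter_of_left _
      obtain ⟨m, hmS, hmax⟩ : ∃ m ∈ ({x : ℝ | ¬ ContinuousAt f x} ∩ Set.Iio a),
          ∀ x ∈ ({x : ℝ | ¬ ContinuousAt f x} ∩ Set.Iio a), id m ≤ id x → id m = id x := by
        obtain ⟨m, hm⟩ := hfin.exists_maximal hne
        exact ⟨m, hm.1, fun x hx hle => le_antisymm hle (hm.2 hx hle)⟩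
      refine ⟨m, hmS.2, fun x hx => ?_⟩
      by_contra hc
      have hxS : x ∈ {x : ℝ | ¬ ContinuousAt f x} ∩ Set.Iio a := ⟨hc, hx.2⟩
      have := hmax x hxS (le_of_lt hx.1)
      simp only [id] at this
      exact (ne_of_lt hx.1) this
    · exact ⟨a - 1, by linarith, fun x hx => by
        by_contra hc
        exact hne ⟨x, hc, hx.2⟩⟩
  -- f is constant on (m, a)
  set t := (m + a) / 2 with ht
  have htm : t ∈ Set.Ioo m a := ⟨by simp [ht]; linarith, by simp [ht]; linarith⟩
  have hconst : ∀ x ∈ Set.Ioo m a, f x = f t := by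
    have hco : ContinuousOn f (Set.Ioo m a) := fun x hx =>
      (hcont x hx).continuousWithinAt
    have hpc : IsPreconnected (f '' Set.Ioo m a) :=
      (isPreconnected_Ioo).image f hco
    have hsub : (f '' Set.Ioo m a).Subsingleton := hpc.subsingleton
    intro x hx
    exact hsub ⟨x, hx, rfl⟩ ⟨t, htm, rfl⟩
  -- hence left limit equals f t
  have htend : Filter.Tendsto f (nhdsWithin a (Set.Iio a)) (nhds (f t)) := by
    have hev : ∀ᶠ x in nhdsWithin a (Set.Iio a), f x = f t := by
      filter_upwards [Ioo_mem_nhdsLT_of_mem (by exact ⟨hm, le_refl a⟩ : a ∈ Set.Ioc m a)]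
        with x hx using hconst x hx
    exact Filter.Tendsto.congr' (Filter.EventuallyEq.symm hev) tendsto_const_nhds
  have hll : Function.leftLim f a = f t :=
    leftLim_eq_of_tendsto htend
  exact ⟨m, hm, fun x hx => by rw [hconst x hx, hll]⟩

/-- Two pyramids cannot differ by an upward jump of 2 at a point while agreeing
just to the left of it. -/
lemma no_up_jump2 (p q : ℝ → ℕ) (hp : IsRealPyramid p) (hq : IsRealPyramid q)
    (t : ℝ) (hval : q t = p t + 2)
    (m : ℝ) (hm : m < t) (heq : ∀ x ∈ Set.Ioo m t, q x = p x) : False := by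
  obtain ⟨-, -, hpm₁, hpm₂, -, hpfin, hpj⟩ := hp
  obtain ⟨-, -, hqm₁, hqm₂, -, hqfin, hqj⟩ := hq
  obtain ⟨m₁, hm₁, hc₁⟩ := left_const p hpfin t
  obtain ⟨m₂, hm₂, hc₂⟩ := left_const q hqfin t
  set M := max m (max m₁ m₂) with hM
  have hMt : M < t := by simp [hM]; exact ⟨hm, hm₁, hm₂⟩
  have hmem : ∀ y, y ∈ Set.Ioo M t →
      y ∈ Set.Ioo m t ∧ y ∈ Set.Ioo m₁ t ∧ y ∈ Set.Ioo m₂ t := by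
    intro y hy
    have h1 : m ≤ M := le_max_left _ _
    have h2 : m₁ ≤ M := le_trans (le_max_left _ _) (le_max_right _ _)
    have h3 : m₂ ≤ M := le_trans (le_max_right _ _) (le_max_right _ _)
    exact ⟨⟨lt_of_le_of_lt h1 hy.1, hy.2⟩, ⟨lt_of_le_of_lt h2 hy.1, hy.2⟩,
      ⟨lt_of_le_of_lt h3 hy.1, hy.2⟩⟩
  set y := (M + t) / 2 with hy
  have hyM : y ∈ Set.Ioo M t := ⟨by simp [hy]; linarith, by simp [hy]; linarith⟩
  obtain ⟨hy1, hy2, hy3⟩ := hmem y hyM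
  have hL : Function.leftLim q t = Function.leftLim p t := by
    rw [← hc₂ y hy3, ← hc₁ y hy2, heq y hy1]
  have hjp := hpj t
  have hjq := hqj t
  rw [hL, hval] at hjq
  have hLval : ((Function.leftLim p t : ℕ) : ℤ) = (p t : ℤ) + 1 := by
    rw [abs_le] at hjp hjq; omega
  rcases le_or_gt t 0 with ht | ht
  · have := hpm₁ (le_of_lt hy2.2) ht
    rw [hc₁ y hy2] at this
    omega
  · set x₀ := (max M 0 + t) / 2 with hx₀
    have hMx : max M 0 < t := max_lt hMt ht
    have hle1 : M ≤ max M 0 := le_max_left _ _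
    have hle2 : (0:ℝ) ≤ max M 0 := le_max_right _ _
    have hx₀mem : x₀ ∈ Set.Ioo M t := by
      rw [Set.mem_Ioo, hx₀]; constructor <;> linarith
    have hx₀0 : 0 ≤ x₀ := by rw [hx₀]; linarith
    obtain ⟨hz1, hz2, hz3⟩ := hmem x₀ hx₀mem
    have hmono := hqm₂ hx₀0 (le_of_lt hz3.2)
    rw [hc₂ x₀ hz3, hL, hval] at hmono
    omega

/-- Two pyramids cannot differ by a downward jump of 2 at a point while agreeing
with `p + 2` just to the left of it. -/
lemma no_down_jump2 (p q : ℝ → ℕ) (hp : IsRealPyramid p) (hq : IsRealPyramid q)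
    (t : ℝ) (hval : q t = p t)
    (m : ℝ) (hm : m < t) (heq : ∀ x ∈ Set.Ioo m t, q x = p x + 2) : False := by
  obtain ⟨-, -, hpm₁, hpm₂, -, hpfin, hpj⟩ := hp
  obtain ⟨-, -, hqm₁, hqm₂, -, hqfin, hqj⟩ := hq
  obtain ⟨m₁, hm₁, hc₁⟩ := left_const p hpfin t
  obtain ⟨m₂, hm₂, hc₂⟩ := left_const q hqfin t
  set M := max m (max m₁ m₂) with hM
  have hMt : M < t := by simp [hM]; exact ⟨hm, hm₁, hm₂⟩
  have hmem : ∀ y, y ∈ Set.Ioo M t →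
      y ∈ Set.Ioo m t ∧ y ∈ Set.Ioo m₁ t ∧ y ∈ Set.Ioo m₂ t := by
    intro y hy
    have h1 : m ≤ M := le_max_left _ _
    have h2 : m₁ ≤ M := le_trans (le_max_left _ _) (le_max_right _ _)
    have h3 : m₂ ≤ M := le_trans (le_max_right _ _) (le_max_right _ _)
    exact ⟨⟨lt_of_le_of_lt h1 hy.1, hy.2⟩, ⟨lt_of_le_of_lt h2 hy.1, hy.2⟩,
      ⟨lt_of_le_of_lt h3 hy.1, hy.2⟩⟩
  set y := (M + t) / 2 with hy
  have hyM : y ∈ Set.Ioo M t := ⟨by simp [hy]; linarith, by simp [hy]; linarith⟩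
  obtain ⟨hy1, hy2, hy3⟩ := hmem y hyM
  have hL : Function.leftLim q t = Function.leftLim p t + 2 := by
    rw [← hc₂ y hy3, ← hc₁ y hy2, heq y hy1]
  have hjp := hpj t
  have hjq := hqj t
  rw [hL, hval] at hjq
  have hLval : ((Function.leftLim p t : ℕ) : ℤ) = (p t : ℤ) - 1 := by
    rw [abs_le] at hjp hjq; push_cast at hjq ⊢; omega
  rcases le_or_gt t 0 with ht | ht
  · have := hqm₁ (le_of_lt hy3.2) ht
    rw [hc₂ y hy3, hL, hval] at this
    omega
  · set x₀ := (max M 0 + t) / 2 with hx₀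
    have hMx : max M 0 < t := max_lt hMt ht
    have hle1 : M ≤ max M 0 := le_max_left _ _
    have hle2 : (0:ℝ) ≤ max M 0 := le_max_right _ _
    have hx₀mem : x₀ ∈ Set.Ioo M t := by
      rw [Set.mem_Ioo, hx₀]; constructor <;> linarith
    have hx₀0 : 0 ≤ x₀ := by rw [hx₀]; linarith
    obtain ⟨hz1, hz2, hz3⟩ := hmem x₀ hx₀mem
    have hmono := hpm₂ hx₀0 (le_of_lt hz2.2)
    rw [hc₁ x₀ hz2] at hmono
    omega

lemma ind_one {a b x : ℝ} (h : x ∈ Set.Ico a b) : ind a b x = 1 :=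
  Set.indicator_of_mem h _

lemma ind_zero {a b x : ℝ} (h : x ∉ Set.Ico a b) : ind a b x = 0 :=
  Set.indicator_of_notMem h _

/-- if `I = [a,b) ⊆ J = [a',b')` and both `I` and `J` can be added to `p`
(in either order), then the closure of `I` lies in the interior of `J`. -/
theorem nested_addable_strict (p : ℝ → ℕ) (hp : IsRealPyramid p) (a b a' b' : ℝ)
    (hab : a < b) (hab' : a' < b') (hsub : Set.Ico a b ⊆ Set.Ico a' b')
    (h : (IsRealPyramid (fun x => p x + ind a b x) ∧
          IsRealPyramid (fun x => p x + ind a b x + ind a' b' x)) ∨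
         (IsRealPyramid (fun x => p x + ind a' b' x) ∧
          IsRealPyramid (fun x => p x + ind a' b' x + ind a b x))) :
    a' < a ∧ b < b' := by
  have ha'a : a' ≤ a := (hsub ⟨le_refl a, hab⟩).1
  have hab'2 : a < b' := (hsub ⟨le_refl a, hab⟩).2
  have hbb' : b ≤ b' := by
    by_contra hc
    push_neg at hc
    have hmem : max a b' ∈ Set.Ico a b := ⟨le_max_left _ _, max_lt hab hc⟩
    exact absurd (hsub hmem).2 (not_lt.2 (le_max_right _ _))
  have hq2 : IsRealPyramid (fun x => p x + ind a b x + ind a' b' x) := by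
    rcases h with ⟨-, h⟩ | ⟨-, h⟩
    · exact h
    · have e : (fun x => p x + ind a' b' x + ind a b x)
          = (fun x => p x + ind a b x + ind a' b' x) := by
        funext x; ring
      rwa [e] at h
  constructor
  · rcases lt_or_eq_of_le ha'a with h1 | h1
    · exact h1
    exfalso
    refine no_up_jump2 p (fun x => p x + ind a b x + ind a' b' x) hp hq2 a ?_
      (a - 1) (by linarith) ?_
    · show p a + ind a b a + ind a' b' a = p a + 2
      rw [ind_one ⟨le_refl a, hab⟩, ind_one ⟨h1.le, hab'2⟩]
    · intro x hx
      show p x + ind a b x + ind a' b' x = p x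
      have h2 : x < a' := by rw [h1]; exact hx.2
      rw [ind_zero (fun hm => absurd hm.1 (not_le.2 hx.2)),
        ind_zero (fun hm => absurd hm.1 (not_le.2 h2))]
      ring
  · rcases lt_or_eq_of_le hbb' with h1 | h1
    · exact h1
    exfalso
    refine no_down_jump2 p (fun x => p x + ind a b x + ind a' b' x) hp hq2 b ?_
      a hab ?_
    · show p b + ind a b b + ind a' b' b = p b
      have h2 : ¬ b < b' := by rw [← h1]; exact lt_irrefl b
      rw [ind_zero (fun hm => lt_irrefl b hm.2), ind_zero (fun hm => h2 hm.2)]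
      ring
    · intro x hx
      show p x + ind a b x + ind a' b' x = p x + 2
      rw [ind_one ⟨hx.1.le, hx.2⟩, ind_one (hsub ⟨hx.1.le, hx.2⟩)]
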